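/- Let S be a double-n string with diameter d < n/2, and let 1 ≤ i ≤ d+1. Then at most 3d + i - n of the symbols in {1, 2, ..., d+1} \ {i} have an occurrence within distance d of the second occurrence of i. -/
import Mathlib


/-- A double-`n` string: a sequence of length `2n` over `n` symbols in which
each symbol appears exactly twice. -/
def IsDoubleString (n : ℕ) (s : Fin (2 * n) → Fin n) : Prop :=
  ∀ a : Fin n, (Finset.univ.filter (fun i => s i = a)).card = 2

/-- The diameter of the string `s` is at most `d`: every pair of distinct
symbols has a pair of occurrences at positional distance at most `d`. -/
def DiamLE (n d : ℕ) (s : Fin (2 * n) → Fin n) : Prop :=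
  ∀ a b : Fin n, a ≠ b →
    ∃ i j : Fin (2 * n), s i = a ∧ s j = b ∧ Nat.dist i.val j.val ≤ d

/-- `delta n` : the minimum diameter over all double-`n` strings. -/
noncomputable def delta (n : ℕ) : ℕ :=
  sInf {d | ∃ s : Fin (2 * n) → Fin n, IsDoubleString n s ∧ DiamLE n d s}

/-- The position of the first occurrence of the symbol `a` in `s`. -/
noncomputable def firstOcc (n : ℕ) (s : Fin (2 * n) → Fin n) (a : Fin n) : ℕ :=
  sInf {i | ∃ h : i < 2 * n, s ⟨i, h⟩ = a}

/-- The position of the second (last) occurrence of the symbol `a` in `s`. -/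
noncomputable def secondOcc (n : ℕ) (s : Fin (2 * n) → Fin n) (a : Fin n) : ℕ :=
  sSup {i | ∃ h : i < 2 * n, s ⟨i, h⟩ = a}

open Finset

section Helpers
variable {n : ℕ} {s : Fin (2 * n) → Fin n}

lemma occ_nonempty (hs : IsDoubleString n s) (a : Fin n) :
    {i | ∃ h : i < 2 * n, s ⟨i, h⟩ = a}.Nonempty := by
  have h := hs a
  have hne : (Finset.univ.filter (fun i => s i = a)).Nonempty := by
    rw [← Finset.card_pos, h]; norm_num
  obtain ⟨p, hp⟩ := hne
  exact ⟨p.val, p.isLt, by simpa using (Finset.mem_filter.mp hp).2⟩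

lemma occ_bdd (a : Fin n) : BddAbove {i | ∃ h : i < 2 * n, s ⟨i, h⟩ = a} := by
  refine ⟨2 * n, fun x hx => ?_⟩
  obtain ⟨h, -⟩ := hx
  exact le_of_lt h

lemma firstOcc_le {a : Fin n} {p : Fin (2 * n)} (hp : s p = a) :
    firstOcc n s a ≤ p.val :=
  Nat.sInf_le ⟨p.isLt, by simpa using hp⟩

lemma le_secondOcc {a : Fin n} {p : Fin (2 * n)} (hp : s p = a) :
    p.val ≤ secondOcc n s a :=
  le_csSup (occ_bdd a) ⟨p.isLt, by simpa using hp⟩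

lemma firstOcc_mem (hs : IsDoubleString n s) (a : Fin n) :
    ∃ h : firstOcc n s a < 2 * n, s ⟨firstOcc n s a, h⟩ = a :=
  Nat.sInf_mem (occ_nonempty hs a)

lemma secondOcc_mem (hs : IsDoubleString n s) (a : Fin n) :
    ∃ h : secondOcc n s a < 2 * n, s ⟨secondOcc n s a, h⟩ = a :=
  Nat.sSup_mem (occ_nonempty hs a) (occ_bdd a)

lemma occ_eq_first_or_second (hs : IsDoubleString n s) {a : Fin n} {r : Fin (2 * n)}
    (hr : s r = a) : r.val = firstOcc n s a ∨ r.val = secondOcc n s a := by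
  by_contra hcon
  push_neg at hcon
  obtain ⟨hr1, hr2⟩ := hcon
  obtain ⟨h1, hp1⟩ := firstOcc_mem hs a
  obtain ⟨h2, hp2⟩ := secondOcc_mem hs a
  have hle1 : firstOcc n s a ≤ r.val := firstOcc_le hr
  have hle2 : r.val ≤ secondOcc n s a := le_secondOcc hr
  set p1 : Fin (2 * n) := ⟨firstOcc n s a, h1⟩
  set p2 : Fin (2 * n) := ⟨secondOcc n s a, h2⟩
  have hsub : ({p1, p2, r} : Finset (Fin (2 * n))) ⊆
      Finset.univ.filter (fun i => s i = a) := by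
    intro x hx
    simp only [Finset.mem_insert, Finset.mem_singleton] at hx
    rcases hx with h | h | h <;> subst h <;> simp [Finset.mem_filter, hp1, hp2, hr]
  have hcard : ({p1, p2, r} : Finset (Fin (2 * n))).card = 3 := by
    refine Finset.card_eq_three.mpr ⟨p1, p2, r, ?_, ?_, ?_, rfl⟩
    · intro h; apply hr1; have : p1.val = p2.val := by rw [h]
      simp only [p1, p2] at this; omega
    · intro h; apply hr1; have := congrArg Fin.val h; simp only [p1] at this; omega
    · intro h; apply hr2; have := congrArg Fin.val h; simp only [p2] at this; omega
  have := Finset.card_le_card hsub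
  rw [hcard, hs a] at this
  omega

lemma firstOcc_ge (horder : ∀ a b : Fin n, a < b → firstOcc n s a < firstOcc n s b) :
    ∀ m : ℕ, ∀ a : Fin n, a.val = m → m ≤ firstOcc n s a := by
  intro m
  induction m with
  | zero => intro a _; exact Nat.zero_le _
  | succ k IH =>
    intro a ha
    have hk : k < n := by omega
    have h1 : firstOcc n s ⟨k, hk⟩ < firstOcc n s a :=
      horder _ _ (by simp [Fin.lt_def, ha])
    have := IH ⟨k, hk⟩ rfl
    omega

/-- cardinality of a filter on positions whose values land in a finset of naturals -/
lemma card_filter_le_of_val_mem {P : Fin (2 * n) → Prop} [DecidablePred P]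
    (t : Finset ℕ) (h : ∀ p, P p → p.val ∈ t) :
    (Finset.univ.filter P).card ≤ t.card := by
  have h1 : (Finset.univ.filter P).card
      = ((Finset.univ.filter P).image Fin.val).card :=
    (Finset.card_image_of_injective _ Fin.val_injective).symm
  rw [h1]
  apply Finset.card_le_card
  intro x hx
  simp only [Finset.mem_image, Finset.mem_filter] at hx
  obtain ⟨p, ⟨-, hp⟩, rfl⟩ := hx
  exact h p hp

end Helpers

section Key
variable {n d : ℕ} {s : Fin (2 * n) → Fin n}

lemma firstOcc_eq (hs : IsDoubleString n s) (hd : DiamLE n d s) (hdn : 2 * d < n)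
    (horder : ∀ a b : Fin n, a < b → firstOcc n s a < firstOcc n s b) :
    ∀ m, m ≤ d → ∀ j : Fin n, j.val = m → firstOcc n s j = m := by
  classical
  intro m
  induction m using Nat.strong_induction_on with
  | _ m IH =>
    intro hm j hj
    have hmn : m < 2 * n := by omega
    set b := s ⟨m, hmn⟩ with hb
    have hfb : firstOcc n s b ≤ m := firstOcc_le (p := ⟨m, hmn⟩) rfl
    have hbge : b.val ≤ firstOcc n s b := firstOcc_ge horder b.val b rfl
    rcases lt_or_ge b.val m with hlt | hge
    · -- b repeats: both occurrences within positions ≤ d; contradiction with 2d < n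
      exfalso
      have hfb' : firstOcc n s b = b.val :=
        IH b.val hlt (by omega) b rfl
      have hocc2 : secondOcc n s b = m := by
        rcases occ_eq_first_or_second hs (r := ⟨m, hmn⟩) (a := b) rfl with h | h
        · simp only at h; omega
        · simpa using h.symm
      -- every symbol has an occurrence at a position ≤ 2d and ≠ m
      have key : ∀ c : Fin n, ∃ p : Fin (2 * n), s p = c ∧ p.val ≤ 2 * d ∧ p.val ≠ m := by
        intro c
        by_cases hc : c = b
        · obtain ⟨h1, hp1⟩ := firstOcc_mem hs b
          refine ⟨⟨firstOcc n s b, h1⟩, by rw [hp1, hc], ?_, ?_⟩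
          · show firstOcc n s b ≤ 2 * d; omega
          · show firstOcc n s b ≠ m; omega
        · obtain ⟨p, q, hpc, hqb, hdist⟩ := hd c b hc
          have hq : q.val = b.val ∨ q.val = m := by
            rcases occ_eq_first_or_second hs hqb with h | h
            · left; omega
            · right; omega
          have hqle : q.val ≤ d := by rcases hq with h | h <;> omega
          have hple : p.val ≤ 2 * d := by
            simp only [Nat.dist] at hdist
            omega
          refine ⟨p, hpc, hple, ?_⟩
          intro hpm
          have : p = (⟨m, hmn⟩ : Fin (2 * n)) := Fin.ext hpm
          rw [this] at hpc
          exact hc (by rw [← hpc, hb])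
      -- build an injection from symbols into at most 2d positions
      let f : Fin n → Fin (2 * n) := fun c => (key c).choose
      have hf : ∀ c, s (f c) = c ∧ (f c).val ≤ 2 * d ∧ (f c).val ≠ m :=
        fun c => (key c).choose_spec
      have hinj : Function.Injective f := by
        intro c c' h
        have h1 := (hf c).1
        rw [h, (hf c').1] at h1
        exact h1.symm
      have himg : Finset.univ.image f ⊆
          Finset.univ.filter (fun p : Fin (2 * n) => p.val ≤ 2 * d ∧ p.val ≠ m) := by
        intro x hx
        simp only [Finset.mem_image] at hx
        obtain ⟨c, -, rfl⟩ := hx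
        simp only [Finset.mem_filter, Finset.mem_univ, true_and]
        exact ⟨(hf c).2.1, (hf c).2.2⟩
      have h1 : n ≤ (Finset.univ.filter
          (fun p : Fin (2 * n) => p.val ≤ 2 * d ∧ p.val ≠ m)).card := by
        calc n = (Finset.univ.image f).card := by
                  rw [Finset.card_image_of_injective _ hinj, Finset.card_univ,
                    Fintype.card_fin]
          _ ≤ _ := Finset.card_le_card himg
      have h2 : (Finset.univ.filter
          (fun p : Fin (2 * n) => p.val ≤ 2 * d ∧ p.val ≠ m)).card ≤ 2 * d := by
        have hle := card_filter_le_of_val_mem (n := n)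
          ((Finset.range (2 * d + 1)).erase m) (P := fun p => p.val ≤ 2 * d ∧ p.val ≠ m)
          (by
            intro p hp
            simp only [Finset.mem_erase, Finset.mem_range]
            exact ⟨hp.2, by omega⟩)
        have hm' : m ∈ Finset.range (2 * d + 1) := by simp; omega
        rw [Finset.card_erase_of_mem hm', Finset.card_range] at hle
        omega
      omega
    · -- new symbol: b = j and firstOcc j = m
      have hbm : b.val = m := by omega
      have hjb : j = b := Fin.ext (by omega)
      have := firstOcc_ge horder m j hj
      rw [hjb]
      omega

end Key

/-- Corollary 5 of the paper.  Let `S` be a double-`n` string with diameter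
`d < n/2`, symbols labeled by order of first occurrence, and let `i` be among
the first `d+1` symbols (1-based label `i.val + 1 ≤ d + 1`).  Then at most
`3d + (i.val + 1) - n` of the symbols `j ≠ i` among the first `d+1` have an
occurrence within distance `d` of the second occurrence of `i` (stated without
natural subtraction as `count + n ≤ 3d + i.val + 1`). -/
theorem near_second_occurrence_bound (n d : ℕ) (s : Fin (2 * n) → Fin n)
    (hs : IsDoubleString n s) (hd : DiamLE n d s) (hdn : 2 * d < n)
    (horder : ∀ a b : Fin n, a < b → firstOcc n s a < firstOcc n s b)
    (i : Fin n) (hi : i.val ≤ d) :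
    Nat.card {j : Fin n // j ≠ i ∧ j.val ≤ d ∧ ∃ p : Fin (2 * n), s p = j ∧
        Nat.dist p.val (secondOcc n s i) ≤ d} + n
      ≤ 3 * d + i.val + 1 := by
  classical
  obtain ⟨hq2lt, hq2occ⟩ := secondOcc_mem hs i
  have hfirst : firstOcc n s i = i.val := firstOcc_eq hs hd hdn horder i.val hi i rfl
  obtain ⟨hf1lt, hf1occ⟩ := firstOcc_mem hs i
  set P : Fin n → Prop := fun j => j ≠ i ∧ j.val ≤ d ∧ ∃ p : Fin (2 * n), s p = j ∧
      Nat.dist p.val (secondOcc n s i) ≤ d with hP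
  have hNat : Nat.card {j : Fin n // P j} = (Finset.univ.filter P).card := by
    simp [Nat.card_eq_fintype_card, Fintype.card_subtype]
  rw [hNat]
  set A := Finset.univ.filter (fun a : Fin n =>
    ∃ p : Fin (2 * n), s p = a ∧ Nat.dist p.val (secondOcc n s i) ≤ d) with hA
  set B := Finset.univ.filter (fun a : Fin n =>
    ∃ p : Fin (2 * n), s p = a ∧ Nat.dist p.val i.val ≤ d) with hB
  -- |A| ≤ 2d + 1
  have hcardA : A.card ≤ 2 * d + 1 := by
    have hsub : A ⊆ (Finset.univ.filter
        (fun p : Fin (2 * n) => Nat.dist p.val (secondOcc n s i) ≤ d)).image s := by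
      intro a ha
      simp only [hA, Finset.mem_filter, Finset.mem_univ, true_and] at ha
      obtain ⟨p, hp1, hp2⟩ := ha
      simp only [Finset.mem_image, Finset.mem_filter, Finset.mem_univ, true_and]
      exact ⟨p, hp2, hp1⟩
    calc A.card ≤ _ := Finset.card_le_card hsub
      _ ≤ (Finset.univ.filter
        (fun p : Fin (2 * n) => Nat.dist p.val (secondOcc n s i) ≤ d)).card :=
          Finset.card_image_le
      _ ≤ (Finset.Icc (secondOcc n s i - d) (secondOcc n s i + d)).card := by
          apply card_filter_le_of_val_mem (n := n)
          intro p hp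
          simp only [Nat.dist] at hp
          simp only [Finset.mem_Icc]
          omega
      _ ≤ 2 * d + 1 := by rw [Nat.card_Icc]; omega
  -- |B| ≤ i + d + 1
  have hcardB : B.card ≤ i.val + d + 1 := by
    have hsub : B ⊆ (Finset.univ.filter
        (fun p : Fin (2 * n) => Nat.dist p.val i.val ≤ d)).image s := by
      intro a ha
      simp only [hB, Finset.mem_filter, Finset.mem_univ, true_and] at ha
      obtain ⟨p, hp1, hp2⟩ := ha
      simp only [Finset.mem_image, Finset.mem_filter, Finset.mem_univ, true_and]
      exact ⟨p, hp2, hp1⟩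
    calc B.card ≤ _ := Finset.card_le_card hsub
      _ ≤ (Finset.univ.filter
        (fun p : Fin (2 * n) => Nat.dist p.val i.val ≤ d)).card :=
          Finset.card_image_le
      _ ≤ (Finset.range (i.val + d + 1)).card := by
          apply card_filter_le_of_val_mem (n := n)
          intro p hp
          simp only [Nat.dist] at hp
          simp only [Finset.mem_range]
          omega
      _ ≤ i.val + d + 1 := by rw [Finset.card_range]
  -- A ∪ B = univ
  have hunion : A ∪ B = Finset.univ := by
    ext a
    simp only [Finset.mem_union, Finset.mem_univ, iff_true, hA, hB,
      Finset.mem_filter, true_and]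
    by_cases ha : a = i
    · left
      exact ⟨⟨secondOcc n s i, hq2lt⟩, by rw [hq2occ, ha], by simp [Nat.dist_self]⟩
    · obtain ⟨pi, pa, hpi, hpa, hdist⟩ := hd i a (fun h => ha h.symm)
      rcases occ_eq_first_or_second hs hpi with h | h
      · right
        refine ⟨pa, hpa, ?_⟩
        rw [hfirst] at h
        simp only [Nat.dist] at hdist ⊢
        omega
      · left
        refine ⟨pa, hpa, ?_⟩
        simp only [Nat.dist] at hdist ⊢
        omega
  -- insert i (filter P) ⊆ A ∩ B
  have hiA : i ∈ A := by
    simp only [hA, Finset.mem_filter, Finset.mem_univ, true_and]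
    exact ⟨⟨secondOcc n s i, hq2lt⟩, hq2occ, by simp [Nat.dist_self]⟩
  have hiB : i ∈ B := by
    simp only [hB, Finset.mem_filter, Finset.mem_univ, true_and]
    refine ⟨⟨firstOcc n s i, hf1lt⟩, hf1occ, ?_⟩
    simp [hfirst, Nat.dist_self]
  have hins : insert i (Finset.univ.filter P) ⊆ A ∩ B := by
    intro j hj
    rcases Finset.mem_insert.mp hj with rfl | hj
    · exact Finset.mem_inter.mpr ⟨hiA, hiB⟩
    · simp only [Finset.mem_filter, Finset.mem_univ, true_and, hP] at hj
      obtain ⟨hji, hjd, hex⟩ := hj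
      refine Finset.mem_inter.mpr ⟨?_, ?_⟩
      · simp only [hA, Finset.mem_filter, Finset.mem_univ, true_and]
        exact hex
      · simp only [hB, Finset.mem_filter, Finset.mem_univ, true_and]
        have hfj : firstOcc n s j = j.val := firstOcc_eq hs hd hdn horder j.val hjd j rfl
        obtain ⟨hjlt, hjocc⟩ := firstOcc_mem hs j
        refine ⟨⟨firstOcc n s j, hjlt⟩, hjocc, ?_⟩
        simp only [Nat.dist, hfj]
        omega
  have hiP : i ∉ Finset.univ.filter P := by
    simp only [Finset.mem_filter, Finset.mem_univ, true_and, hP]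
    intro h
    exact h.1 rfl
  have hinter : (Finset.univ.filter P).card + 1 ≤ (A ∩ B).card := by
    have := Finset.card_le_card hins
    rwa [Finset.card_insert_of_notMem hiP] at this
  have hucount := Finset.card_union_add_card_inter A B
  rw [hunion, Finset.card_univ, Fintype.card_fin] at hucount
  omega
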